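/- Bounds on the number of vectors in a quaternionic equiangular tight frame: suppose d ≥ 2 and v_1, …, v_n ∈ ℍ^d are unit vectors with n > d + 1, equiangular (|⟨v_j, v_k⟩|² = λ for all j ≠ k) and tight (V·Vᴴ = (n/d)·I_d). Then d + 1/2 + (1/2)·√(2d + 1) ≤ n ≤ d + 2d(d − 1) = 2d² − d. -/

import Mathlib

open Quaternion Matrix BigOperators

/-- Euclidean inner product on `ℍ^d`: `⟨v,w⟩ = ∑ i, conj (w i) * v i`
(linear in the first variable). -/
noncomputable def qip {d : ℕ} (v w : Fin d → ℍ[ℝ]) : ℍ[ℝ] :=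
  ∑ i, star (w i) * v i

/-- Squared Euclidean norm on `ℍ^d`, a nonnegative real. -/
noncomputable def nsq {d : ℕ} (v : Fin d → ℍ[ℝ]) : ℝ :=
  ∑ i, Quaternion.normSq (v i)

namespace ETFAux

lemma re_sum {ι : Type*} (s : Finset ι) (f : ι → ℍ[ℝ]) :
    (∑ i ∈ s, f i).re = ∑ i ∈ s, (f i).re :=
  map_sum (QuaternionAlgebra.reₗ (R := ℝ) (c₁ := -1) (c₂ := 0) (c₃ := -1)) f s

lemma coe_sum {ι : Type*} (s : Finset ι) (f : ι → ℝ) :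
    ((∑ i ∈ s, f i : ℝ) : ℍ[ℝ]) = ∑ i ∈ s, ((f i : ℝ) : ℍ[ℝ]) := by
  rw [← Quaternion.algebraMap_def]
  exact map_sum (algebraMap ℝ ℍ[ℝ]) f s

lemma re_mul_comm (a b : ℍ[ℝ]) : (a * b).re = (b * a).re := by
  simp [Quaternion.re_mul]; ring

lemma re_cycle (a b c d : ℍ[ℝ]) : (a * b * (c * d)).re = (d * a * (b * c)).re := by
  rw [show a * b * (c * d) = a * (b * c) * d by simp only [mul_assoc], re_mul_comm,
    show d * (a * (b * c)) = d * a * (b * c) by simp only [mul_assoc]]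

/-- real-bilinear "Frobenius" form -/
noncomputable def bf {I : Type*} [Fintype I] (A B : Matrix I I ℍ[ℝ]) : ℝ :=
  ∑ i, ∑ l, (A i l * star (B i l)).re

lemma bf_smul {I : Type*} [Fintype I] (r : ℝ) (A B : Matrix I I ℍ[ℝ]) :
    bf (r • A) B = r * bf A B := by
  unfold bf
  simp only [Matrix.smul_apply, smul_mul_assoc, Quaternion.re_smul, smul_eq_mul,
    Finset.mul_sum]

/-- `bf · B` as a real-linear map. -/
noncomputable def bfl {I : Type*} [Fintype I] (B : Matrix I I ℍ[ℝ]) :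
    Matrix I I ℍ[ℝ] →ₗ[ℝ] ℝ where
  toFun A := bf A B
  map_add' A C := by
    unfold bf
    simp only [Matrix.add_apply, add_mul, Quaternion.re_add, Finset.sum_add_distrib]
  map_smul' r A := bf_smul r A B

lemma bfl_apply {I : Type*} [Fintype I] (A B : Matrix I I ℍ[ℝ]) : bfl B A = bf A B := rfl

noncomputable def outer {I : Type*} [Fintype I] (x : I → ℍ[ℝ]) : Matrix I I ℍ[ℝ] :=
  Matrix.of fun i l => x i * star (x l)

lemma outer_herm {I : Type*} [Fintype I] (x : I → ℍ[ℝ]) : (outer x)ᴴ = outer x := by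
  refine Matrix.ext fun i l => ?_
  simp only [outer, Matrix.conjTranspose_apply, Matrix.of_apply, StarMul.star_mul, star_star]

lemma bf_outer {N : ℕ} (x y : Fin N → ℍ[ℝ]) :
    bf (outer x) (outer y) = Quaternion.normSq (qip x y) := by
  rw [Quaternion.normSq_def]
  unfold bf outer qip
  rw [star_sum]
  simp only [StarMul.star_mul, star_star]
  rw [Finset.sum_mul_sum, re_sum]
  simp only [re_sum]
  refine Finset.sum_congr rfl fun i _ => ?_
  refine Finset.sum_congr rfl fun l _ => ?_
  simp only [Matrix.of_apply, StarMul.star_mul, star_star]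
  exact re_cycle _ _ _ _

lemma qip_self {N : ℕ} (x : Fin N → ℍ[ℝ]) : qip x x = ((nsq x : ℝ) : ℍ[ℝ]) := by
  unfold qip nsq
  rw [coe_sum]
  exact Finset.sum_congr rfl fun i _ => Quaternion.star_mul_self (x i)

/-- linear independence from the Gram matrix being `(a-c)I + cJ` with `0 ≤ c < a`. -/
lemma indep_of_gram {I : Type*} [Fintype I] {n : ℕ} (S : Fin n → Matrix I I ℍ[ℝ])
    (a c : ℝ) (hc : 0 ≤ c) (hca : c < a)
    (hdg : ∀ j, bf (S j) (S j) = a)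
    (ho : ∀ j k, j ≠ k → bf (S j) (S k) = c) :
    LinearIndependent ℝ S := by
  rw [Fintype.linearIndependent_iff]
  intro g hg
  have key : ∀ k, (a - c) * g k + c * ∑ j, g j = 0 := by
    intro k
    have h0 : bfl (S k) (∑ j, g j • S j) = 0 := by rw [hg]; simp
    rw [map_sum] at h0
    simp only [_root_.map_smul, bfl_apply, smul_eq_mul] at h0
    rw [← Finset.add_sum_erase _ _ (Finset.mem_univ k), hdg k] at h0
    rw [Finset.sum_congr rfl (fun j hj => by
      rw [ho j k (Finset.ne_of_mem_erase hj)])] at h0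
    rw [← Finset.sum_mul] at h0
    have : ∑ j ∈ Finset.univ.erase k, g j = (∑ j, g j) - g k := by
      rw [← Finset.add_sum_erase _ _ (Finset.mem_univ k)]; ring
    rw [this] at h0
    ring_nf at h0 ⊢
    linarith
  have hT : ∑ j, g j = 0 := by
    have h1 : ∑ k, ((a - c) * g k + c * ∑ j, g j) = 0 := by
      simp only [key]; simp
    rw [Finset.sum_add_distrib, ← Finset.mul_sum, Finset.sum_const, Finset.card_univ,
      Fintype.card_fin, nsmul_eq_mul] at h1
    by_contra hne
    rcases lt_or_gt_of_ne hne with h | h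
    · nlinarith [mul_nonneg (Nat.cast_nonneg (α := ℝ) n)
        (mul_nonneg hc (le_of_lt (neg_pos.mpr h)))]
    · nlinarith [mul_nonneg (Nat.cast_nonneg (α := ℝ) n) (mul_nonneg hc h.le)]
  intro k
  have := key k
  rw [hT] at this
  have hac : a - c > 0 := by linarith
  nlinarith

def ltEquiv (r : ℕ) : {p : Fin r × Fin r // p.1 < p.2} ≃ Σ j : Fin r, Fin j.1 where
  toFun p := ⟨p.1.2, ⟨p.1.1, p.2⟩⟩
  invFun q := ⟨(⟨q.2.1, q.2.2.trans q.1.2⟩, q.1), q.2.2⟩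
  left_inv p := rfl
  right_inv q := rfl

lemma card_lt_pairs (r : ℕ) :
    Fintype.card {p : Fin r × Fin r // p.1 < p.2} * 2 = r * (r - 1) := by
  rw [Fintype.card_congr (ltEquiv r), Fintype.card_sigma]
  simp only [Fintype.card_fin]
  rw [show (∑ x : Fin r, (x : ℕ)) = ∑ i ∈ Finset.range r, i from
    Fin.sum_univ_eq_sum_range (fun i => i) r]
  exact Finset.sum_range_id_mul_two r

lemma conjT_smul {I : Type*} [Fintype I] (c : ℝ) (A : Matrix I I ℍ[ℝ]) :
    (c • A)ᴴ = c • Aᴴ :=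
  Matrix.ext fun i l => by
    simp only [Matrix.conjTranspose_apply, Matrix.smul_apply, Quaternion.star_smul]

/-- The real-linear "coordinates" map on Hermitian matrices. -/
noncomputable def phi (r : ℕ) :
    Matrix (Fin r) (Fin r) ℍ[ℝ] →ₗ[ℝ]
      (Fin r → ℝ) × ({p : Fin r × Fin r // p.1 < p.2} → ℍ[ℝ]) where
  toFun M := (fun i => (M i i).re, fun p => M p.1.1 p.1.2)
  map_add' M N := by
    refine Prod.ext ?_ ?_ <;> funext x <;>
      simp [Matrix.add_apply]
  map_smul' c M := by
    refine Prod.ext ?_ ?_ <;> funext x <;>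
      simp [Matrix.smul_apply, Quaternion.re_smul]

lemma herm_card_le {r n : ℕ} (X : Fin n → Matrix (Fin r) (Fin r) ℍ[ℝ])
    (hherm : ∀ j, (X j)ᴴ = X j) (hind : LinearIndependent ℝ X) :
    (n : ℝ) ≤ r + 2 * r * ((r : ℝ) - 1) := by
  have hind2 : LinearIndependent ℝ (fun j => phi r (X j)) := by
    rw [Fintype.linearIndependent_iff]
    intro g hg
    have hM : phi r (∑ j, g j • X j) = 0 := by
      rw [map_sum]
      simpa only [_root_.map_smul] using hg
    have hMherm : (∑ j, g j • X j)ᴴ = (∑ j, g j • X j) := by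
      rw [Matrix.conjTranspose_sum]
      exact Finset.sum_congr rfl fun j _ => by rw [conjT_smul, hherm j]
    have h1 : ∀ i, ((∑ j, g j • X j) i i).re = 0 := fun i =>
      congrFun (congrArg Prod.fst hM) i
    have h2 : ∀ p : {p : Fin r × Fin r // p.1 < p.2},
        (∑ j, g j • X j) p.1.1 p.1.2 = 0 := fun p =>
      congrFun (congrArg Prod.snd hM) p
    have hM0 : (∑ j, g j • X j) = 0 := by
      refine Matrix.ext fun i l => ?_
      rw [Matrix.zero_apply]
      rcases lt_trichotomy i l with h | h | h
      · exact h2 ⟨(i, l), h⟩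
      · subst h
        have hstar : star ((∑ j, g j • X j) i i) = (∑ j, g j • X j) i i := by
          rw [← Matrix.conjTranspose_apply, hMherm]
        rw [Quaternion.star_eq_self] at hstar
        rw [hstar, h1 i]
        simp
      · have : (∑ j, g j • X j) i l = star ((∑ j, g j • X j) l i) := by
          rw [← Matrix.conjTranspose_apply, hMherm]
        rw [this, h2 ⟨(l, i), h⟩, star_zero]
    rw [Fintype.linearIndependent_iff] at hind
    exact hind g hM0
  have hcard := hind2.fintype_card_le_finrank
  rw [Fintype.card_fin] at hcard
  have hfr : Module.finrank ℝ ((Fin r → ℝ) × ({p : Fin r × Fin r // p.1 < p.2} → ℍ[ℝ]))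
      = r + Fintype.card {p : Fin r × Fin r // p.1 < p.2} * 4 := by
    rw [Module.finrank_prod]
    congr 1
    · simp [Module.finrank_fintype_fun_eq_card]
    · rw [Module.finrank_pi_fintype]
      simp [Quaternion.finrank_eq_four]
  rw [hfr] at hcard
  have h2c := card_lt_pairs r
  have hcast : ((Fintype.card {p : Fin r × Fin r // p.1 < p.2} : ℝ)) * 4
      ≤ 2 * r * ((r : ℝ) - 1) := by
    rcases Nat.eq_zero_or_pos r with hr | hr
    · subst hr
      have h0 : Fintype.card {p : Fin 0 × Fin 0 // p.1 < p.2} = 0 := by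
        simpa using h2c
      rw [h0]
      norm_num
    · have hcc : ((Fintype.card {p : Fin r × Fin r // p.1 < p.2} : ℝ)) * 2
          = r * ((r : ℝ) - 1) := by
        have := congrArg (Nat.cast : ℕ → ℝ) h2c
        push_cast [Nat.cast_sub hr] at this
        linarith [this]
      nlinarith [hcc]
  have hle : ((n : ℝ)) ≤ (r : ℝ) + (Fintype.card {p : Fin r × Fin r // p.1 < p.2} : ℝ) * 4 := by
    exact_mod_cast hcard
  linarith

/-- The key scalar identity extracted from tightness. -/
lemma tight_rows {d n : ℕ} (v : Fin n → (Fin d → ℍ[ℝ]))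
    (hunit : ∀ j, nsq (v j) = 1)
    (htight : (Matrix.of fun i j => v j i) * (Matrix.of fun i j => v j i)ᴴ =
      ((n : ℝ) / (d : ℝ)) • (1 : Matrix (Fin d) (Fin d) ℍ[ℝ])) (k : Fin n) :
    ∑ j, Quaternion.normSq (qip (v j) (v k)) = (n : ℝ) / (d : ℝ) := by
  have hent : ∀ i l, (∑ j, v j i * star (v j l))
      = ((n : ℝ) / (d : ℝ)) • (if i = l then (1 : ℍ[ℝ]) else 0) := by
    intro i l
    have := congrFun (congrFun htight i) l
    simpa [Matrix.mul_apply, Matrix.conjTranspose_apply, Matrix.smul_apply,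
      Matrix.one_apply] using this
  have hsum : (∑ j, qip (v j) (v k) * star (qip (v j) (v k)))
      = (((n : ℝ) / (d : ℝ) : ℝ) : ℍ[ℝ]) := by
    have step1 : ∀ j, qip (v j) (v k) * star (qip (v j) (v k))
        = ∑ i, ∑ l, star (v k i) * (v j i * (star (v j l) * v k l)) := by
      intro j
      unfold qip
      rw [star_sum]
      simp only [StarMul.star_mul, star_star]
      rw [Finset.sum_mul_sum]
      simp only [mul_assoc]
    calc (∑ j, qip (v j) (v k) * star (qip (v j) (v k)))
        = ∑ j, ∑ i, ∑ l, star (v k i) * (v j i * (star (v j l) * v k l)) := by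
          exact Finset.sum_congr rfl fun j _ => step1 j
      _ = ∑ i, ∑ l, ∑ j, star (v k i) * (v j i * (star (v j l) * v k l)) := by
          rw [Finset.sum_comm]
          exact Finset.sum_congr rfl fun i _ => Finset.sum_comm
      _ = ∑ i, ∑ l, star (v k i) * ((∑ j, v j i * star (v j l)) * v k l) := by
          refine Finset.sum_congr rfl fun i _ => Finset.sum_congr rfl fun l _ => ?_
          rw [Finset.sum_mul, Finset.mul_sum]
          simp only [mul_assoc]
      _ = ∑ i, ∑ l, star (v k i) * ((((n : ℝ) / (d : ℝ)) •
            (if i = l then (1 : ℍ[ℝ]) else 0)) * v k l) := by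
          simp_rw [hent]
      _ = ∑ i, ((n : ℝ) / (d : ℝ)) • (star (v k i) * v k i) := by
          refine Finset.sum_congr rfl fun i _ => ?_
          rw [Finset.sum_eq_single i]
          · simp [mul_smul_comm]
          · intro l _ hl
            simp [Ne.symm hl]
          · simp
      _ = ((n : ℝ) / (d : ℝ)) • ((nsq (v k) : ℝ) : ℍ[ℝ]) := by
          rw [← Finset.smul_sum]
          congr 1
          unfold nsq
          rw [coe_sum]
          exact Finset.sum_congr rfl fun i _ => Quaternion.star_mul_self (v k i)
      _ = (((n : ℝ) / (d : ℝ) : ℝ) : ℍ[ℝ]) := by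
          rw [hunit k]
          rw [← Quaternion.algebraMap_def, Algebra.algebraMap_eq_smul_one,
            Algebra.algebraMap_eq_smul_one]
          simp
  have := congrArg QuaternionAlgebra.re hsum
  rw [re_sum, Quaternion.re_coe] at this
  simpa [Quaternion.normSq_def] using this

noncomputable def psi {r n : ℕ} (u : Fin r → Fin n → ℍ[ℝ]) :
    Matrix (Fin r) (Fin r) ℍ[ℝ] →ₗ[ℝ] Matrix (Fin n) (Fin n) ℍ[ℝ] where
  toFun M := Matrix.of fun i l => ∑ a, ∑ b, u a i * M a b * star (u b l)
  map_add' M N := by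
    refine Matrix.ext fun i l => ?_
    simp only [Matrix.of_apply, Matrix.add_apply, mul_add, add_mul,
      Finset.sum_add_distrib]
  map_smul' c M := by
    refine Matrix.ext fun i l => ?_
    simp only [Matrix.of_apply, Matrix.smul_apply, RingHom.id_apply, mul_smul_comm,
      smul_mul_assoc, Finset.smul_sum]

lemma psi_outer {r n : ℕ} (u : Fin r → Fin n → ℍ[ℝ]) (x : Fin r → ℍ[ℝ])
    (cvec : Fin n → ℍ[ℝ]) (h : ∀ i, cvec i = ∑ a, u a i * x a) :
    psi u (outer x) = outer cvec := by
  refine Matrix.ext fun i l => ?_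
  show ∑ a, ∑ b, u a i * (x a * star (x b)) * star (u b l) = cvec i * star (cvec l)
  rw [h i, h l, star_sum]
  simp only [StarMul.star_mul]
  rw [Finset.sum_mul_sum]
  refine Finset.sum_congr rfl fun a _ => Finset.sum_congr rfl fun b _ => ?_
  simp only [mul_assoc]

lemma vecMul_smul_one {n : ℕ} (c : ℝ) (y : Fin n → ℍ[ℝ]) :
    y ᵥ* (c • (1 : Matrix (Fin n) (Fin n) ℍ[ℝ])) = c • y := by
  funext k
  simp [Matrix.vecMul, dotProduct, Matrix.smul_apply, Matrix.one_apply,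
    mul_ite, mul_zero, mul_smul_comm, Finset.sum_ite_eq]

end ETFAux

set_option maxHeartbeats 1000000 in
/-- Bounds on the number of vectors of a quaternionic equiangular tight frame:
if `d ≥ 2`, `n > d + 1`, and `v_1, …, v_n ∈ ℍ^d` are equiangular unit vectors
forming a tight frame (`V Vᴴ = (n/d) I_d`), then
`d + 1/2 + (1/2)√(2d+1) ≤ n ≤ d + 2d(d−1) = 2d² − d`. -/
theorem equiangular_tight_frame_vector_bounds (d n : ℕ) (hd : 2 ≤ d)
    (hn : d + 1 < n) (lam : ℝ)
    (v : Fin n → (Fin d → ℍ[ℝ]))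
    (hunit : ∀ j, nsq (v j) = 1)
    (hequi : ∀ j k, j ≠ k → Quaternion.normSq (qip (v j) (v k)) = lam)
    (htight : (Matrix.of fun i j => v j i) * (Matrix.of fun i j => v j i)ᴴ =
      ((n : ℝ) / (d : ℝ)) • (1 : Matrix (Fin d) (Fin d) ℍ[ℝ])) :
    (d : ℝ) + 1 / 2 + (1 / 2) * Real.sqrt (2 * (d : ℝ) + 1) ≤ (n : ℝ) ∧
    (n : ℝ) ≤ (d : ℝ) + 2 * (d : ℝ) * ((d : ℝ) - 1) := by
  classical
  have hD2 : (2 : ℝ) ≤ (d : ℝ) := by exact_mod_cast hd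
  have hNd : (d : ℝ) + 2 ≤ (n : ℝ) := by exact_mod_cast (by omega : d + 2 ≤ n)
  have hD0 : (0 : ℝ) < (d : ℝ) := by linarith
  have hN0 : (0 : ℝ) < (n : ℝ) := by linarith
  have hqself : ∀ k : Fin n, Quaternion.normSq (qip (v k) (v k)) = 1 := by
    intro k; rw [ETFAux.qip_self, Quaternion.normSq_coe, hunit k]; norm_num
  have hkey := ETFAux.tight_rows v hunit htight ⟨0, by omega⟩
  have hlam : 1 + ((n : ℝ) - 1) * lam = (n : ℝ) / (d : ℝ) := by
    rw [← hkey,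
      ← Finset.add_sum_erase _ _ (Finset.mem_univ (⟨0, by omega⟩ : Fin n))]
    congr 1
    · exact (hqself _).symm
    · rw [Finset.sum_congr rfl (fun j hj => hequi j _ (Finset.ne_of_mem_erase hj)),
        Finset.sum_const, Finset.card_erase_of_mem (Finset.mem_univ _),
        Finset.card_univ, Fintype.card_fin, nsmul_eq_mul]
      congr 1
      push_cast [Nat.cast_sub (by omega : 1 ≤ n)]
      ring
  have hlam0 : 0 ≤ lam := by
    rw [← hequi ⟨1, by omega⟩ ⟨0, by omega⟩ (by simp [Fin.ext_iff])]
    exact Quaternion.normSq_nonneg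
  have h1 : (d : ℝ) * (1 + ((n : ℝ) - 1) * lam) = (n : ℝ) := by
    rw [hlam]; field_simp
  have hlam1 : lam < 1 := by
    by_contra hcon
    push_neg at hcon
    have hfac : (0 : ℝ) ≤ (d : ℝ) * ((n : ℝ) - 1) := by nlinarith
    nlinarith [mul_le_mul_of_nonneg_left hcon hfac,
      mul_le_mul_of_nonneg_right hD2 (show (0 : ℝ) ≤ (n : ℝ) - 1 by linarith)]
  have hupper : (n : ℝ) ≤ (d : ℝ) + 2 * (d : ℝ) * ((d : ℝ) - 1) := by
    refine ETFAux.herm_card_le (fun j => ETFAux.outer (v j))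
      (fun j => ETFAux.outer_herm _) ?_
    refine ETFAux.indep_of_gram _ 1 lam hlam0 hlam1 ?_ ?_
    · intro j; rw [ETFAux.bf_outer]; exact hqself j
    · intro j k hjk; rw [ETFAux.bf_outer]; exact hequi j k hjk
  refine ⟨?_, hupper⟩
  -- lower bound
  set W : Matrix (Fin d) (Fin n) ℍ[ℝ] := Matrix.of fun i j => v j i with hW
  set G : Matrix (Fin n) (Fin n) ℍ[ℝ] := Wᴴ * W with hG
  set a0 : ℝ := (d : ℝ) / (n : ℝ) with ha0
  set Q : Matrix (Fin n) (Fin n) ℍ[ℝ] := 1 - a0 • G with hQ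
  have hGent : ∀ j k, G j k = qip (v k) (v j) := by
    intro j k
    rw [hG, Matrix.mul_apply]
    exact Finset.sum_congr rfl fun i _ => by rw [Matrix.conjTranspose_apply]; rfl
  have hGG : G * G = ((n : ℝ) / (d : ℝ)) • G := by
    have e1 : G * G = Wᴴ * ((W * Wᴴ) * W) := by
      rw [hG]; simp only [Matrix.mul_assoc]
    rw [e1, htight, Matrix.smul_mul, Matrix.mul_smul, Matrix.one_mul, hG]
  have hQG : Q * G = 0 := by
    rw [hQ, Matrix.sub_mul, Matrix.one_mul, Matrix.smul_mul, hGG, smul_smul,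
      show a0 * ((n : ℝ) / (d : ℝ)) = 1 by rw [ha0]; field_simp, one_smul, sub_self]
  have hQQ : Q * Q = Q := by
    have e1 : Q * Q = Q * (1 - a0 • G) := by rw [← hQ]
    rw [e1, Matrix.mul_sub, Matrix.mul_one, Matrix.mul_smul, hQG, smul_zero, sub_zero]
  have hQH : Qᴴ = Q := by
    rw [hQ, Matrix.conjTranspose_sub, Matrix.conjTranspose_one, ETFAux.conjT_smul, hG,
      Matrix.conjTranspose_mul, Matrix.conjTranspose_conjTranspose]
  have hQd : ∀ j, Q j j = ((1 - a0 : ℝ) : ℍ[ℝ]) := by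
    intro j
    have hGd : G j j = (1 : ℍ[ℝ]) := by
      rw [hGent j j, ETFAux.qip_self, hunit j]
      norm_num
    rw [hQ, Matrix.sub_apply, Matrix.smul_apply, Matrix.one_apply_eq, hGd]
    calc (1 : ℍ[ℝ]) - a0 • (1 : ℍ[ℝ]) = ((1 : ℝ) - a0) • (1 : ℍ[ℝ]) := by
          rw [sub_smul, one_smul]
      _ = ((1 - a0 : ℝ) : ℍ[ℝ]) := by
          rw [← Quaternion.algebraMap_def, Algebra.algebraMap_eq_smul_one]
  have hQo : ∀ j k, j ≠ k → Quaternion.normSq (Q k j) = a0 ^ 2 * lam := by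
    intro j k hjk
    have h1 : Q k j = -(a0 • G k j) := by
      rw [hQ, Matrix.sub_apply, Matrix.smul_apply, Matrix.one_apply_ne (Ne.symm hjk),
        zero_sub]
    rw [h1, Quaternion.normSq_neg, Quaternion.normSq_smul, hGent, hequi j k hjk]
  -- the rows of Q lie in the kernel of `· ᵥ* G`, which has dimension n - d
  have hQGrow : ∀ j, G.vecMulLinear (fun i => Q j i) = 0 := by
    intro j
    funext k
    have := congrFun (congrFun hQG j) k
    simpa [Matrix.vecMulLinear_apply, Matrix.vecMul, dotProduct,
      Matrix.mul_apply] using this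
  have hrange : Module.finrank ℍ[ℝ] (LinearMap.range G.vecMulLinear) = d := by
    have hcomp : G.vecMulLinear = (W.vecMulLinear).comp (Wᴴ).vecMulLinear := by
      refine LinearMap.ext fun x => ?_
      simp [Matrix.vecMulLinear_apply, hG, Matrix.vecMul_vecMul]
    have hsurj : Function.Surjective (Wᴴ).vecMulLinear := by
      intro z
      refine ⟨((d : ℝ) / (n : ℝ)) • (W.vecMulLinear z), ?_⟩
      rw [Matrix.vecMulLinear_apply, Matrix.vecMulLinear_apply, Matrix.smul_vecMul,
        Matrix.vecMul_vecMul, htight, ETFAux.vecMul_smul_one, smul_smul,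
        show (d : ℝ) / (n : ℝ) * ((n : ℝ) / (d : ℝ)) = 1 by field_simp, one_smul]
    have hinj : LinearMap.ker (W.vecMulLinear) = ⊥ := by
      refine LinearMap.ker_eq_bot'.mpr fun y hy => ?_
      have h2 : (y ᵥ* W) ᵥ* Wᴴ = 0 := by
        rw [show y ᵥ* W = 0 from hy, Matrix.zero_vecMul]
      rw [Matrix.vecMul_vecMul, htight, ETFAux.vecMul_smul_one] at h2
      funext k
      have h3 := congrFun h2 k
      simp only [Pi.smul_apply, Pi.zero_apply] at h3
      rcases smul_eq_zero.mp h3 with h4 | h4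
      · exact absurd h4 (by positivity)
      · exact h4
    rw [hcomp, LinearMap.range_comp, LinearMap.range_eq_top.mpr hsurj,
      Submodule.map_top]
    have h3 := LinearMap.finrank_range_add_finrank_ker (W.vecMulLinear)
    rw [hinj, finrank_bot, add_zero, Module.finrank_fin_fun] at h3
    exact h3
  have hker := LinearMap.finrank_range_add_finrank_ker (G.vecMulLinear)
  rw [hrange, Module.finrank_fin_fun] at hker
  set r := Module.finrank ℍ[ℝ] (LinearMap.ker G.vecMulLinear) with hrdef
  have hrN : (r : ℝ) = (n : ℝ) - (d : ℝ) := by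
    have : (d : ℝ) + (r : ℝ) = (n : ℝ) := by exact_mod_cast hker
    linarith
  let b : Module.Basis (Fin r) ℍ[ℝ] (LinearMap.ker G.vecMulLinear) :=
    Module.finBasis ℍ[ℝ] _
  let row : Fin n → LinearMap.ker G.vecMulLinear := fun j =>
    ⟨fun i => Q j i, LinearMap.mem_ker.mpr (hQGrow j)⟩
  let xv : Fin n → Fin r → ℍ[ℝ] := fun j a => star (b.repr (row j) a)
  let uv : Fin r → Fin n → ℍ[ℝ] := fun a i => star (((b a : _) : Fin n → ℍ[ℝ]) i)
  have hdecomp : ∀ j i, Q i j = ∑ a, uv a i * xv j a := by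
    intro j i
    have h1 : ((row j : _) : Fin n → ℍ[ℝ])
        = ∑ a, b.repr (row j) a • ((b a : _) : Fin n → ℍ[ℝ]) := by
      conv_lhs => rw [← b.sum_repr (row j)]
      exact AddSubmonoidClass.coe_finset_sum _ _
    have h2 : Q j i = ∑ a, b.repr (row j) a * ((b a : _) : Fin n → ℍ[ℝ]) i := by
      have := congrFun h1 i
      simpa [Finset.sum_apply, Pi.smul_apply, smul_eq_mul] using this
    have h3 : Q i j = star (Q j i) := by rw [← Matrix.conjTranspose_apply, hQH]
    rw [h3, h2, star_sum]
    exact Finset.sum_congr rfl fun a _ => by rw [StarMul.star_mul]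
  have hcq : ∀ j k, qip (fun i => Q i j) (fun i => Q i k) = Q k j := by
    intro j k
    unfold qip
    have hstar : ∀ i, star (Q i k) = Q k i := fun i => by
      rw [← Matrix.conjTranspose_apply, hQH]
    simp_rw [hstar]
    rw [← Matrix.mul_apply, hQQ]
  have hcca : a0 ^ 2 * lam < (1 - a0) ^ 2 := by
    have hND : (0 : ℝ) < (n : ℝ) - (d : ℝ) := by linarith
    have hN1 : (0 : ℝ) < (n : ℝ) - 1 := by linarith
    have h2 : (d : ℝ) * (((n : ℝ) - 1) * lam) = (n : ℝ) - (d : ℝ) := by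
      ring_nf at h1 ⊢
      linarith
    have h3 : (2 : ℝ) * ((d : ℝ) + 1) ≤ ((n : ℝ) - (d : ℝ)) * ((n : ℝ) - 1) :=
      mul_le_mul (by linarith) (by linarith) (by linarith) (by linarith)
    have hmain : (d : ℝ) ^ 2 * lam < ((n : ℝ) - (d : ℝ)) ^ 2 := by
      nlinarith [h2, h3, hND, hN1, hlam0, mul_pos hND hN1]
    have e1 : 1 - a0 = ((n : ℝ) - (d : ℝ)) / (n : ℝ) := by
      rw [ha0]; field_simp
    rw [e1, ha0, div_pow, div_pow, div_mul_eq_mul_div,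
      div_lt_div_iff₀ (by positivity) (by positivity)]
    nlinarith [hmain, sq_nonneg (n : ℝ)]
  have hlow : (n : ℝ) ≤ (r : ℝ) + 2 * (r : ℝ) * ((r : ℝ) - 1) := by
    refine ETFAux.herm_card_le (fun j => ETFAux.outer (xv j))
      (fun j => ETFAux.outer_herm _) ?_
    have hindS : LinearIndependent ℝ (fun j => ETFAux.psi uv (ETFAux.outer (xv j))) := by
      have heq : (fun j => ETFAux.psi uv (ETFAux.outer (xv j)))
          = fun j => ETFAux.outer (fun i => Q i j) := by
        funext j
        exact ETFAux.psi_outer uv (xv j) _ (fun i => hdecomp j i)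
      rw [heq]
      refine ETFAux.indep_of_gram _ ((1 - a0) ^ 2) (a0 ^ 2 * lam)
        (by positivity) hcca ?_ ?_
      · intro j
        rw [ETFAux.bf_outer, hcq j j, hQd j, Quaternion.normSq_coe]
      · intro j k hjk
        rw [ETFAux.bf_outer, hcq j k, hQo j k hjk]
    exact hindS.of_comp (ETFAux.psi uv)
  rw [hrN] at hlow
  have hDle : (d : ℝ) ≤ 2 * ((n : ℝ) - (d : ℝ)) * (((n : ℝ) - (d : ℝ)) - 1) := by
    linarith
  have hs : Real.sqrt (2 * (d : ℝ) + 1) ≤ 2 * ((n : ℝ) - (d : ℝ)) - 1 := by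
    have h9 : (2 * (d : ℝ) + 1) ≤ (2 * ((n : ℝ) - (d : ℝ)) - 1) ^ 2 := by
      nlinarith [hDle]
    calc Real.sqrt (2 * (d : ℝ) + 1)
        ≤ Real.sqrt ((2 * ((n : ℝ) - (d : ℝ)) - 1) ^ 2) := Real.sqrt_le_sqrt h9
      _ = 2 * ((n : ℝ) - (d : ℝ)) - 1 := Real.sqrt_sq (by linarith)
  linarith
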